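/- Let G be a finite simple graph in which every vertex has degree exactly 3, with n = |V(G)| = 2^m for some m ≥ 1, let k be an integer with 1 < k < n−1, and let G' (with weights, β, α and k' as specified) be the associated gadget graph. If G has a vertex cover of size k, then G' has a treedepth decomposition of weighted depth at most k' = 3n + k + α + 2; in particular wtd(G') ≤ k'. -/

import Mathlib

/-- A treedepth decomposition of a simple graph `G`: a partial order `le` on the
vertices such that the set of elements below any vertex is linearly ordered, and
the endpoints of every edge are comparable. -/
structure TDDecomp {V : Type*} (G : SimpleGraph V) where
  le : V → V → Prop
  le_refl : ∀ x, le x x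
  le_antisymm : ∀ x y, le x y → le y x → x = y
  le_trans : ∀ x y z, le x y → le y z → le x z
  down_linear : ∀ x y z, le y x → le z x → le y z ∨ le z y
  adj_comparable : ∀ u v, G.Adj u v → le u v ∨ le v u

/-- A chain of a treedepth decomposition: a finite set of pairwise comparable vertices. -/
def TDDecomp.IsChain {V : Type*} {G : SimpleGraph V} (T : TDDecomp G) (C : Finset V) : Prop :=
  ∀ x ∈ C, ∀ y ∈ C, T.le x y ∨ T.le y x

/-- The weighted depth of a treedepth decomposition: the maximum over all chains `C`
of the total weight of `C`. -/
noncomputable def TDDecomp.weightedDepth {V : Type*} {G : SimpleGraph V}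
    (T : TDDecomp G) (w : V → ℕ) : ℕ :=
  sSup {s | ∃ C : Finset V, T.IsChain C ∧ s = C.sum w}

/-- The weighted treedepth of `G` with weight function `w`: the minimum weighted depth
over all treedepth decompositions of `G`. -/
noncomputable def wtd {V : Type*} (G : SimpleGraph V) (w : V → ℕ) : ℕ :=
  sInf {s | ∃ T : TDDecomp G, s = T.weightedDepth w}

/-- Vertices of the gadget graph `G'` built from a cubic graph `G` on `2^m` vertices:
`copy v i` is `v_{i+1}` (the two copies `v_1, v_2` of `v`), `guard v i` is `v_{g(i+1)}`
(the three vertices `v_{g1}, v_{g2}, v_{g3}`), and `tree t i j` is the `j`-th vertex at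
depth `i` of the complete binary tree `T_{t+1}` (depth `m` vertices are the `2^m` leaves). -/
inductive GadgetV (V : Type*) (m : ℕ) where
  | copy : V → Fin 2 → GadgetV V m
  | guard : V → Fin 3 → GadgetV V m
  | tree : Fin 3 → (i : Fin (m + 1)) → Fin (2 ^ i.val) → GadgetV V m

/-- The base relation generating the edges of `G'` (for `e : V ≃ Fin (2^m)` the
identification of `V(G)` with the leaves of each tree):
copies of adjacent vertices are adjacent (`u_1v_1, u_2v_2, u_1v_2, u_2v_1`);
each `v_{gi}` is adjacent to `v_1` and `v_2`; consecutive levels of each complete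
binary tree `T_t` are joined (child `j'` at depth `i+1` to parent `j'/2` at depth `i`);
and `v_1, v_{g1}` are joined to the leaf `v_{t_1}` of `T_1`, `v_2, v_{g2}` to the leaf
`v_{t_2}` of `T_2`, and `v_{g3}` to the leaf `v_{t_3}` of `T_3`. -/
def gadgetRel {V : Type*} {m : ℕ} (G : SimpleGraph V) (e : V ≃ Fin (2 ^ m)) :
    GadgetV V m → GadgetV V m → Prop
  | .copy u _, .copy v _ => G.Adj u v
  | .copy u _, .guard v _ => u = v
  | .copy u i, .tree t d j => (t : ℕ) = (i : ℕ) ∧ (d : ℕ) = m ∧ (j : ℕ) = (e u : ℕ)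
  | .guard u i, .tree t d j => (t : ℕ) = (i : ℕ) ∧ (d : ℕ) = m ∧ (j : ℕ) = (e u : ℕ)
  | .tree t d j, .tree t' d' j' => t = t' ∧ (d : ℕ) + 1 = (d' : ℕ) ∧ (j' : ℕ) / 2 = (j : ℕ)
  | _, _ => False

/-- The gadget graph `G'`. -/
def gadget {V : Type*} {m : ℕ} (G : SimpleGraph V) (e : V ≃ Fin (2 ^ m)) :
    SimpleGraph (GadgetV V m) :=
  SimpleGraph.fromRel (gadgetRel G e)

/-- The weight function of `G'` (with parameter `β`): copies `v_1, v_2` have weight `2`,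
the `v_{gi}` have weight `1`, and a tree vertex at depth `i` has weight `β + 3i`. -/
def gadgetW {V : Type*} {m : ℕ} (β : ℕ) : GadgetV V m → ℕ
  | .copy _ _ => 2
  | .guard _ _ => 1
  | .tree _ i _ => β + 3 * (i : ℕ)

namespace Stmt11Aux

variable {V : Type*} {m : ℕ}

lemma divdiv (x : ℕ) {a b c : ℕ} (hab : a ≤ b) (hbc : b ≤ c) :
    x / 2 ^ (c - b) / 2 ^ (b - a) = x / 2 ^ (c - a) := by
  rw [Nat.div_div_eq_div_mul, ← pow_add]
  congr 2
  omega

def isSp (C : Finset V) : GadgetV V m → Prop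
  | .copy v _ => v ∈ C
  | .guard v _ => v ∉ C
  | .tree _ _ _ => False

def isCG : GadgetV V m → Prop
  | .copy _ _ => True
  | .guard _ _ => True
  | .tree _ _ _ => False

def isTr : GadgetV V m → Prop
  | .copy _ _ => False
  | .guard _ _ => False
  | .tree _ _ _ => True

def isCp : GadgetV V m → Prop
  | .copy _ _ => True
  | .guard _ _ => False
  | .tree _ _ _ => False

def sr (e : V ≃ Fin (2 ^ m)) : GadgetV V m → ℕ
  | .copy v i => 2 * (e v : ℕ) + (i : ℕ)
  | .guard v i => 2 * 2 ^ m + 3 * (e v : ℕ) + (i : ℕ)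
  | .tree _ _ _ => 0

def pT : GadgetV V m → ℕ
  | .copy _ i => (i : ℕ)
  | .guard _ i => (i : ℕ)
  | .tree _ _ _ => 0

def pL (e : V ≃ Fin (2 ^ m)) : GadgetV V m → ℕ
  | .copy v _ => (e v : ℕ)
  | .guard v _ => (e v : ℕ)
  | .tree _ _ _ => 0

def dep : GadgetV V m → ℕ
  | .copy _ _ => 0
  | .guard _ _ => 0
  | .tree _ d _ => (d : ℕ)

def anc : GadgetV V m → GadgetV V m → Prop
  | .tree t d j, .tree t' d' j' =>
      t = t' ∧ (d : ℕ) ≤ (d' : ℕ) ∧ (j' : ℕ) / 2 ^ ((d' : ℕ) - (d : ℕ)) = (j : ℕ)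
  | _, _ => False

def leafAnc (C : Finset V) (e : V ≃ Fin (2 ^ m)) : GadgetV V m → GadgetV V m → Prop
  | .tree t d j, y => isCG y ∧ ¬ isSp C y ∧ (t : ℕ) = pT y ∧
      pL e y / 2 ^ (m - (d : ℕ)) = (j : ℕ)
  | _, _ => False

def tdle (C : Finset V) (e : V ≃ Fin (2 ^ m)) (x y : GadgetV V m) : Prop :=
  x = y ∨ (isSp C x ∧ isSp C y ∧ sr e x < sr e y) ∨ (isSp C x ∧ ¬ isSp C y)
    ∨ anc x y ∨ leafAnc C e x y

lemma anc_isTr_left {x y : GadgetV V m} (h : anc x y) : isTr x := by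
  cases x <;> cases y <;> simp_all [anc, isTr]

lemma anc_isTr_right {x y : GadgetV V m} (h : anc x y) : isTr y := by
  cases x <;> cases y <;> simp_all [anc, isTr]

lemma leafAnc_isTr_left {C : Finset V} {e : V ≃ Fin (2 ^ m)} {x y : GadgetV V m}
    (h : leafAnc C e x y) : isTr x := by
  cases x <;> simp_all [leafAnc, isTr]

lemma leafAnc_right {C : Finset V} {e : V ≃ Fin (2 ^ m)} {x y : GadgetV V m}
    (h : leafAnc C e x y) : isCG y ∧ ¬ isSp C y := by
  cases x <;> simp_all [leafAnc]

lemma isSp_isCG {C : Finset V} {x : GadgetV V m} (h : isSp C x) : isCG x := by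
  cases x <;> simp_all [isSp, isCG]

lemma not_isSp_of_isTr {C : Finset V} {x : GadgetV V m} (h : isTr x) : ¬ isSp C x := by
  cases x <;> simp_all [isSp, isTr]

lemma not_isCG_of_isTr {x : GadgetV V m} (h : isTr x) : ¬ isCG x := by
  cases x <;> simp_all [isCG, isTr]

lemma sr_inj (e : V ≃ Fin (2 ^ m)) {x y : GadgetV V m} (hx : isCG x) (hy : isCG y)
    (h : sr e x = sr e y) : x = y := by
  have key : ∀ a b : V, (e a : ℕ) = (e b : ℕ) → a = b := fun a b hh =>
    e.injective (Fin.val_injective hh)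
  cases x with
  | copy v i =>
    cases y with
    | copy u j =>
      simp only [sr] at h
      have hi := i.isLt; have hj := j.isLt
      have h1 : (e v : ℕ) = (e u : ℕ) := by omega
      have h2 : (i : ℕ) = (j : ℕ) := by omega
      rw [key v u h1, Fin.val_injective h2]
    | guard u j =>
      exfalso
      simp only [sr] at h
      have := (e v).isLt; have := i.isLt
      omega
    | tree t d j => simp [isCG] at hy
  | guard v i =>
    cases y with
    | copy u j =>
      exfalso
      simp only [sr] at h
      have := (e u).isLt; have := j.isLt
      omega
    | guard u j =>
      simp only [sr] at h
      have hi := i.isLt; have hj := j.isLt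
      have h1 : (e v : ℕ) = (e u : ℕ) := by omega
      have h2 : (i : ℕ) = (j : ℕ) := by omega
      rw [key v u h1, Fin.val_injective h2]
    | tree t d j => simp [isCG] at hy
  | tree t d j => simp [isCG] at hx

lemma tree_eq {t t' : Fin 3} {d d' : Fin (m + 1)} {j : Fin (2 ^ d.val)} {j' : Fin (2 ^ d'.val)}
    (ht : t = t') (hd : (d : ℕ) = (d' : ℕ)) (hj : (j : ℕ) = (j' : ℕ)) :
    (GadgetV.tree t d j : GadgetV V m) = GadgetV.tree t' d' j' := by
  subst ht
  have hd2 : d = d' := Fin.val_injective hd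
  subst hd2
  rw [Fin.val_injective hj]

lemma tdle_refl (C : Finset V) (e : V ≃ Fin (2 ^ m)) (x : GadgetV V m) : tdle C e x x :=
  Or.inl rfl

lemma tdle_antisymm (C : Finset V) (e : V ≃ Fin (2 ^ m)) :
    ∀ x y : GadgetV V m, tdle C e x y → tdle C e y x → x = y := by
  intro x y hxy hyx
  rcases hxy with rfl | ⟨hx, hy, hlt⟩ | ⟨hx, hny⟩ | h | h
  · rfl
  · rcases hyx with rfl | ⟨_, _, hlt'⟩ | ⟨_, hnx⟩ | h' | h'
    · rfl
    · omega
    · exact absurd hx hnx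
    · exact absurd hx (not_isSp_of_isTr (anc_isTr_right h'))
    · exact absurd hx (leafAnc_right h').2
  · rcases hyx with rfl | ⟨hy, _, _⟩ | ⟨hy, _⟩ | h' | h'
    · rfl
    · exact absurd hy hny
    · exact absurd hy hny
    · exact absurd hx (not_isSp_of_isTr (anc_isTr_right h'))
    · exact absurd hx (leafAnc_right h').2
  · rcases hyx with rfl | ⟨hy, _, _⟩ | ⟨hy, _⟩ | h' | h'
    · rfl
    · exact absurd hy (not_isSp_of_isTr (anc_isTr_right h))
    · exact absurd hy (not_isSp_of_isTr (anc_isTr_right h))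
    · -- both anc: equality
      cases x with
      | copy => exact absurd h (by simp [anc])
      | guard => exact absurd h (by simp [anc])
      | tree t d j =>
        cases y with
        | copy => exact absurd h (by simp [anc])
        | guard => exact absurd h (by simp [anc])
        | tree t' d' j' =>
          simp only [anc] at h h'
          have hd : (d : ℕ) = (d' : ℕ) := le_antisymm h.2.1 h'.2.1
          have hj : (j : ℕ) = (j' : ℕ) := by
            have := h.2.2
            rw [show (d' : ℕ) - (d : ℕ) = 0 by omega, pow_zero, Nat.div_one] at this
            omega
          exact tree_eq h.1 hd hj
    · exact absurd (leafAnc_right h').1 (not_isCG_of_isTr (anc_isTr_left h))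
  · rcases hyx with rfl | ⟨hy, _, _⟩ | ⟨hy, _⟩ | h' | h'
    · rfl
    · exact absurd hy (leafAnc_right h).2
    · exact absurd hy (leafAnc_right h).2
    · exact absurd (leafAnc_right h).1 (not_isCG_of_isTr (anc_isTr_left h'))
    · exact absurd (leafAnc_right h).1 (not_isCG_of_isTr (leafAnc_isTr_left h'))

lemma anc_trans {x y z : GadgetV V m} (h : anc x y) (h' : anc y z) : anc x z := by
  cases x with
  | copy => exact absurd h (by simp [anc])
  | guard => exact absurd h (by simp [anc])
  | tree t d j =>
    cases y with
    | copy => exact absurd h (by simp [anc])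
    | guard => exact absurd h (by simp [anc])
    | tree t' d' j' =>
      cases z with
      | copy => exact absurd h' (by simp [anc])
      | guard => exact absurd h' (by simp [anc])
      | tree t'' d'' j'' =>
        simp only [anc] at h h' ⊢
        refine ⟨h.1.trans h'.1, h.2.1.trans h'.2.1, ?_⟩
        rw [← h.2.2, ← h'.2.2]
        exact (divdiv _ h.2.1 h'.2.1).symm

lemma anc_leafAnc_trans {C : Finset V} {e : V ≃ Fin (2 ^ m)} {x y z : GadgetV V m}
    (h : anc x y) (h' : leafAnc C e y z) : leafAnc C e x z := by
  cases x with
  | copy => exact absurd h (by simp [anc])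
  | guard => exact absurd h (by simp [anc])
  | tree t d j =>
    cases y with
    | copy => exact absurd h (by simp [anc])
    | guard => exact absurd h (by simp [anc])
    | tree t' d' j' =>
      simp only [anc] at h
      simp only [leafAnc] at h' ⊢
      have hd' : (d' : ℕ) ≤ m := by have := d'.isLt; omega
      refine ⟨h'.1, h'.2.1, by rw [show (t : ℕ) = (t' : ℕ) from congrArg Fin.val h.1]; exact h'.2.2.1, ?_⟩
      rw [← h.2.2, ← h'.2.2.2]
      exact (divdiv _ h.2.1 hd').symm

lemma tdle_trans (C : Finset V) (e : V ≃ Fin (2 ^ m)) :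
    ∀ x y z : GadgetV V m, tdle C e x y → tdle C e y z → tdle C e x z := by
  intro x y z hxy hyz
  rcases hxy with rfl | ⟨hx, hy, hlt⟩ | ⟨hx, hny⟩ | h | h
  · exact hyz
  · rcases hyz with rfl | ⟨_, hz, hlt'⟩ | ⟨_, hnz⟩ | h' | h'
    · exact Or.inr (Or.inl ⟨hx, hy, hlt⟩)
    · exact Or.inr (Or.inl ⟨hx, hz, hlt.trans hlt'⟩)
    · exact Or.inr (Or.inr (Or.inl ⟨hx, hnz⟩))
    · exact absurd hy (not_isSp_of_isTr (anc_isTr_left h'))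
    · exact absurd hy (not_isSp_of_isTr (leafAnc_isTr_left h'))
  · rcases hyz with rfl | ⟨hy, _, _⟩ | ⟨hy, _⟩ | h' | h'
    · exact Or.inr (Or.inr (Or.inl ⟨hx, hny⟩))
    · exact absurd hy hny
    · exact absurd hy hny
    · exact Or.inr (Or.inr (Or.inl ⟨hx, not_isSp_of_isTr (anc_isTr_right h')⟩))
    · exact Or.inr (Or.inr (Or.inl ⟨hx, (leafAnc_right h').2⟩))
  · rcases hyz with rfl | ⟨hy, _, _⟩ | ⟨hy, _⟩ | h' | h'
    · exact Or.inr (Or.inr (Or.inr (Or.inl h)))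
    · exact absurd hy (not_isSp_of_isTr (anc_isTr_right h))
    · exact absurd hy (not_isSp_of_isTr (anc_isTr_right h))
    · exact Or.inr (Or.inr (Or.inr (Or.inl (anc_trans h h'))))
    · exact Or.inr (Or.inr (Or.inr (Or.inr (anc_leafAnc_trans h h'))))
  · rcases hyz with rfl | ⟨hy, _, _⟩ | ⟨hy, _⟩ | h' | h'
    · exact Or.inr (Or.inr (Or.inr (Or.inr h)))
    · exact absurd hy (leafAnc_right h).2
    · exact absurd hy (leafAnc_right h).2
    · exact absurd (leafAnc_right h).1 (not_isCG_of_isTr (anc_isTr_left h'))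
    · exact absurd (leafAnc_right h).1 (not_isCG_of_isTr (leafAnc_isTr_left h'))

lemma anc_down {x y z : GadgetV V m} (h : anc y x) (h' : anc z x) : anc y z ∨ anc z y := by
  cases x with
  | copy => exact absurd h (by simp [anc])
  | guard => exact absurd h (by simp [anc])
  | tree t d j =>
    cases y with
    | copy => exact absurd h (by simp [anc])
    | guard => exact absurd h (by simp [anc])
    | tree t' d' j' =>
      cases z with
      | copy => exact absurd h' (by simp [anc])
      | guard => exact absurd h' (by simp [anc])
      | tree t'' d'' j'' =>
        simp only [anc] at h h' ⊢
        rcases le_total (d' : ℕ) (d'' : ℕ) with hle | hle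
        · refine Or.inl ⟨h.1.trans h'.1.symm, hle, ?_⟩
          rw [← h.2.2, ← h'.2.2]
          exact divdiv _ hle h'.2.1
        · refine Or.inr ⟨h'.1.trans h.1.symm, hle, ?_⟩
          rw [← h.2.2, ← h'.2.2]
          exact divdiv _ hle h.2.1

lemma leafAnc_down {C : Finset V} {e : V ≃ Fin (2 ^ m)} {x y z : GadgetV V m}
    (h : leafAnc C e y x) (h' : leafAnc C e z x) : anc y z ∨ anc z y := by
  cases y with
  | copy => exact absurd h (by simp [leafAnc])
  | guard => exact absurd h (by simp [leafAnc])
  | tree t' d' j' =>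
    cases z with
    | copy => exact absurd h' (by simp [leafAnc])
    | guard => exact absurd h' (by simp [leafAnc])
    | tree t'' d'' j'' =>
      simp only [leafAnc] at h h'
      have hd' : (d' : ℕ) ≤ m := by have := d'.isLt; omega
      have hd'' : (d'' : ℕ) ≤ m := by have := d''.isLt; omega
      have ht : t' = t'' := Fin.val_injective (h.2.2.1.trans h'.2.2.1.symm)
      simp only [anc]
      rcases le_total (d' : ℕ) (d'' : ℕ) with hle | hle
      · refine Or.inl ⟨ht, hle, ?_⟩
        rw [← h.2.2.2, ← h'.2.2.2]
        exact divdiv _ hle hd''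
      · refine Or.inr ⟨ht.symm, hle, ?_⟩
        rw [← h.2.2.2, ← h'.2.2.2]
        exact divdiv _ hle hd'

lemma tdle_down (C : Finset V) (e : V ≃ Fin (2 ^ m)) :
    ∀ x y z : GadgetV V m, tdle C e y x → tdle C e z x → tdle C e y z ∨ tdle C e z y := by
  intro x y z hyx hzx
  by_cases hy : isSp C y
  · by_cases hz : isSp C z
    · by_cases hyz : y = z
      · exact Or.inl (Or.inl hyz)
      · have hne : sr e y ≠ sr e z := fun hh => hyz (sr_inj e (isSp_isCG hy) (isSp_isCG hz) hh)
        rcases lt_or_gt_of_ne hne with hlt | hlt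
        · exact Or.inl (Or.inr (Or.inl ⟨hy, hz, hlt⟩))
        · exact Or.inr (Or.inr (Or.inl ⟨hz, hy, hlt⟩))
    · exact Or.inl (Or.inr (Or.inr (Or.inl ⟨hy, hz⟩)))
  · by_cases hz : isSp C z
    · exact Or.inr (Or.inr (Or.inr (Or.inl ⟨hz, hy⟩)))
    · rcases hyx with rfl | ⟨hy', _, _⟩ | ⟨hy', _⟩ | h | h
      · exact Or.inr hzx
      · exact absurd hy' hy
      · exact absurd hy' hy
      · rcases hzx with rfl | ⟨hz', _, _⟩ | ⟨hz', _⟩ | h' | h'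
        · exact Or.inl (Or.inr (Or.inr (Or.inr (Or.inl h))))
        · exact absurd hz' hz
        · exact absurd hz' hz
        · rcases anc_down h h' with hh | hh
          · exact Or.inl (Or.inr (Or.inr (Or.inr (Or.inl hh))))
          · exact Or.inr (Or.inr (Or.inr (Or.inr (Or.inl hh))))
        · exact absurd (leafAnc_right h').1 (not_isCG_of_isTr (anc_isTr_right h))
      · rcases hzx with rfl | ⟨hz', _, _⟩ | ⟨hz', _⟩ | h' | h'
        · exact Or.inl (Or.inr (Or.inr (Or.inr (Or.inr h))))
        · exact absurd hz' hz
        · exact absurd hz' hz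
        · exact absurd (leafAnc_right h).1 (not_isCG_of_isTr (anc_isTr_right h'))
        · rcases leafAnc_down h h' with hh | hh
          · exact Or.inl (Or.inr (Or.inr (Or.inr (Or.inl hh))))
          · exact Or.inr (Or.inr (Or.inr (Or.inr (Or.inl hh))))

lemma rel_comp {G : SimpleGraph V} (e : V ≃ Fin (2 ^ m)) (C : Finset V)
    (hcov : ∀ u v : V, G.Adj u v → u ∈ C ∨ v ∈ C)
    {x y : GadgetV V m} (h : gadgetRel G e x y) :
    tdle C e x y ∨ tdle C e y x := by
  classical
  cases x with
  | copy u i =>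
    cases y with
    | copy v j =>
      simp only [gadgetRel] at h
      have hne : u ≠ v := h.ne
      have key : u ∈ C → v ∈ C → tdle C e (.copy u i) (.copy v j) ∨ tdle C e (.copy v j) (.copy u i) := by
        intro hu hv
        have hEne : (e u : ℕ) ≠ (e v : ℕ) := fun hh => hne (e.injective (Fin.val_injective hh))
        have hsr : sr e (GadgetV.copy u i : GadgetV V m) ≠ sr e (GadgetV.copy v j) := by
          simp only [sr]
          have := i.isLt; have := j.isLt
          omega
        rcases lt_or_gt_of_ne hsr with hlt | hlt
        · exact Or.inl (Or.inr (Or.inl ⟨hu, hv, hlt⟩))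
        · exact Or.inr (Or.inr (Or.inl ⟨hv, hu, hlt⟩))
      rcases hcov u v h with hu | hv
      · by_cases hv : v ∈ C
        · exact key hu hv
        · exact Or.inl (Or.inr (Or.inr (Or.inl ⟨hu, hv⟩)))
      · by_cases hu : u ∈ C
        · exact key hu hv
        · exact Or.inr (Or.inr (Or.inr (Or.inl ⟨hv, hu⟩)))
    | guard v j =>
      simp only [gadgetRel] at h
      subst h
      by_cases hu : u ∈ C
      · exact Or.inl (Or.inr (Or.inr (Or.inl ⟨hu, by simp [isSp, hu]⟩)))
      · exact Or.inr (Or.inr (Or.inr (Or.inl ⟨hu, by simp [isSp, hu]⟩)))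
    | tree t d j =>
      simp only [gadgetRel] at h
      by_cases hu : u ∈ C
      · exact Or.inl (Or.inr (Or.inr (Or.inl ⟨hu, by simp [isSp]⟩)))
      · refine Or.inr (Or.inr (Or.inr (Or.inr (Or.inr ?_))))
        simp only [leafAnc, isCG, isSp, pT, pL]
        exact ⟨trivial, hu, h.1, by rw [show m - (d : ℕ) = 0 by omega, pow_zero, Nat.div_one]; exact h.2.2.symm⟩
  | guard u i =>
    cases y with
    | copy v j => exact absurd h (by simp [gadgetRel])
    | guard v j => exact absurd h (by simp [gadgetRel])
    | tree t d j =>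
      simp only [gadgetRel] at h
      by_cases hu : u ∈ C
      · refine Or.inr (Or.inr (Or.inr (Or.inr (Or.inr ?_))))
        simp only [leafAnc, isCG, isSp, pT, pL]
        exact ⟨trivial, by simp [hu], h.1, by rw [show m - (d : ℕ) = 0 by omega, pow_zero, Nat.div_one]; exact h.2.2.symm⟩
      · exact Or.inl (Or.inr (Or.inr (Or.inl ⟨hu, by simp [isSp]⟩)))
  | tree t d j =>
    cases y with
    | copy v j' => exact absurd h (by simp [gadgetRel])
    | guard v j' => exact absurd h (by simp [gadgetRel])
    | tree t' d' j' =>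
      simp only [gadgetRel] at h
      refine Or.inl (Or.inr (Or.inr (Or.inr (Or.inl ?_))))
      simp only [anc]
      refine ⟨h.1, by omega, ?_⟩
      rw [show (d' : ℕ) - (d : ℕ) = 1 by omega, pow_one]
      exact h.2.2

lemma tdle_adj {G : SimpleGraph V} (e : V ≃ Fin (2 ^ m)) (C : Finset V)
    (hcov : ∀ u v : V, G.Adj u v → u ∈ C ∨ v ∈ C) :
    ∀ x y : GadgetV V m, (gadget G e).Adj x y → tdle C e x y ∨ tdle C e y x := by
  intro x y hxy
  rw [gadget, SimpleGraph.fromRel_adj] at hxy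
  rcases hxy.2 with h | h
  · exact rel_comp e C hcov h
  · exact (rel_comp e C hcov h).symm

lemma tdle_tree_eq {C : Finset V} {e : V ≃ Fin (2 ^ m)} {a b : GadgetV V m}
    (h : tdle C e a b) (ha : isTr a) (hb : isTr b) (hd : dep a = dep b) : a = b := by
  rcases h with rfl | ⟨h1, _, _⟩ | ⟨h1, _⟩ | h | h
  · rfl
  · exact absurd h1 (not_isSp_of_isTr ha)
  · exact absurd h1 (not_isSp_of_isTr ha)
  · cases a with
    | copy => simp [isTr] at ha
    | guard => simp [isTr] at ha
    | tree t d j =>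
      cases b with
      | copy => simp [isTr] at hb
      | guard => simp [isTr] at hb
      | tree t' d' j' =>
        simp only [anc] at h
        simp only [dep] at hd
        have hj : (j : ℕ) = (j' : ℕ) := by
          have := h.2.2
          rw [show (d' : ℕ) - (d : ℕ) = 0 by omega, pow_zero, Nat.div_one] at this
          omega
        exact tree_eq h.1 hd hj
  · exact absurd (leafAnc_right h).1 (not_isCG_of_isTr hb)

lemma tdle_pend_eq {C : Finset V} {e : V ≃ Fin (2 ^ m)} {a b : GadgetV V m}
    (h : tdle C e a b) (ha : ¬ isSp C a) (hna : ¬ isTr a) : a = b := by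
  rcases h with rfl | ⟨h1, _, _⟩ | ⟨h1, _⟩ | h | h
  · rfl
  · exact absurd h1 ha
  · exact absurd h1 ha
  · exact absurd (anc_isTr_left h) hna
  · exact absurd (leafAnc_isTr_left h) hna

lemma chain_sum_le [Fintype V] (e : V ≃ Fin (2 ^ m)) (C : Finset V) (β : ℕ)
    (Ch : Finset (GadgetV V m))
    (hch : ∀ x ∈ Ch, ∀ y ∈ Ch, tdle C e x y ∨ tdle C e y x) :
    Ch.sum (gadgetW β) ≤
      C.card * 2 * 2 + (Fintype.card V - C.card) * 3 +
        (∑ i ∈ Finset.range (m + 1), (β + 3 * i)) + 2 := by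
  classical
  have hsplit1 : Ch.sum (gadgetW β)
      = (Ch.filter (fun x => isSp C x)).sum (gadgetW β)
        + (Ch.filter (fun x => ¬ isSp C x)).sum (gadgetW β) :=
    (Finset.sum_filter_add_sum_filter_not Ch _ _).symm
  have hsplit2 : (Ch.filter (fun x => ¬ isSp C x)).sum (gadgetW β)
      = ((Ch.filter (fun x => ¬ isSp C x)).filter (fun x => isTr x)).sum (gadgetW β)
        + ((Ch.filter (fun x => ¬ isSp C x)).filter (fun x => ¬ isTr x)).sum (gadgetW β) :=
    (Finset.sum_filter_add_sum_filter_not _ _ _).symm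
  have hsplit3 : (Ch.filter (fun x => isSp C x)).sum (gadgetW β)
      = ((Ch.filter (fun x => isSp C x)).filter (fun x => isCp x)).sum (gadgetW β)
        + ((Ch.filter (fun x => isSp C x)).filter (fun x => ¬ isCp x)).sum (gadgetW β) :=
    (Finset.sum_filter_add_sum_filter_not _ _ _).symm
  -- spine copies
  have hSc : ((Ch.filter (fun x => isSp C x)).filter (fun x => isCp x)).sum (gadgetW β)
      ≤ C.card * 2 * 2 := by
    have h1 : ((Ch.filter (fun x => isSp C x)).filter (fun x => isCp x)).sum (gadgetW β)
        ≤ ((Ch.filter (fun x => isSp C x)).filter (fun x => isCp x)).card • 2 := by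
      apply Finset.sum_le_card_nsmul
      intro x hx
      simp only [Finset.mem_filter] at hx
      cases x with
      | copy => exact le_refl 2
      | guard => exact one_le_two
      | tree => simp [isCp] at hx
    have h2 : ((Ch.filter (fun x => isSp C x)).filter (fun x => isCp x)).card
        ≤ C.card * 2 := by
      have := Finset.card_le_card_of_injOn
        (f := fun x : GadgetV V m => match x with
          | .copy v i => some (v, i)
          | _ => (none : Option (V × Fin 2)))
        (s := (Ch.filter (fun x => isSp C x)).filter (fun x => isCp x))
        (t := (C ×ˢ (Finset.univ : Finset (Fin 2))).image some)
        (by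
          intro x hx
          simp only [Finset.mem_coe, Finset.mem_filter] at hx ⊢
          cases x with
          | copy v i =>
            simp only [Finset.mem_image]
            exact ⟨(v, i), Finset.mem_product.2 ⟨hx.1.2, Finset.mem_univ _⟩, rfl⟩
          | guard => simp [isCp] at hx
          | tree => simp [isCp] at hx)
        (by
          intro x hx y hy hxy
          simp only [Finset.mem_coe, Finset.mem_filter] at hx hy
          cases x with
          | copy v i =>
            cases y with
            | copy u j =>
              simp only [Option.some.injEq, Prod.mk.injEq] at hxy
              rw [hxy.1, hxy.2]
            | guard => simp [isCp] at hy
            | tree => simp [isCp] at hy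
          | guard => simp [isCp] at hx
          | tree => simp [isCp] at hx)
      calc ((Ch.filter (fun x => isSp C x)).filter (fun x => isCp x)).card
          ≤ ((C ×ˢ (Finset.univ : Finset (Fin 2))).image some).card := this
        _ ≤ (C ×ˢ (Finset.univ : Finset (Fin 2))).card := Finset.card_image_le
        _ = C.card * 2 := by simp [Finset.card_product]
    calc ((Ch.filter (fun x => isSp C x)).filter (fun x => isCp x)).sum (gadgetW β)
        ≤ ((Ch.filter (fun x => isSp C x)).filter (fun x => isCp x)).card • 2 := h1
      _ = ((Ch.filter (fun x => isSp C x)).filter (fun x => isCp x)).card * 2 := by rw [smul_eq_mul]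
      _ ≤ C.card * 2 * 2 := Nat.mul_le_mul_right 2 h2
  -- spine guards
  have hSg : ((Ch.filter (fun x => isSp C x)).filter (fun x => ¬ isCp x)).sum (gadgetW β)
      ≤ (Fintype.card V - C.card) * 3 := by
    have h1 : ((Ch.filter (fun x => isSp C x)).filter (fun x => ¬ isCp x)).sum (gadgetW β)
        ≤ ((Ch.filter (fun x => isSp C x)).filter (fun x => ¬ isCp x)).card • 1 := by
      apply Finset.sum_le_card_nsmul
      intro x hx
      simp only [Finset.mem_filter] at hx
      cases x with
      | copy => simp [isCp] at hx
      | guard => exact le_refl 1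
      | tree => simp [isSp] at hx
    have h2 : ((Ch.filter (fun x => isSp C x)).filter (fun x => ¬ isCp x)).card
        ≤ (Fintype.card V - C.card) * 3 := by
      have := Finset.card_le_card_of_injOn
        (f := fun x : GadgetV V m => match x with
          | .guard v i => some (v, i)
          | _ => (none : Option (V × Fin 3)))
        (s := (Ch.filter (fun x => isSp C x)).filter (fun x => ¬ isCp x))
        (t := (Cᶜ ×ˢ (Finset.univ : Finset (Fin 3))).image some)
        (by
          intro x hx
          simp only [Finset.mem_coe, Finset.mem_filter] at hx ⊢
          cases x with
          | copy => simp [isCp] at hx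
          | guard v i =>
            simp only [Finset.mem_image]
            refine ⟨(v, i), Finset.mem_product.2 ⟨?_, Finset.mem_univ _⟩, rfl⟩
            simpa [Finset.mem_compl, isSp] using hx.1.2
          | tree => simp [isSp] at hx)
        (by
          intro x hx y hy hxy
          simp only [Finset.mem_coe, Finset.mem_filter] at hx hy
          cases x with
          | copy => simp [isCp] at hx
          | guard v i =>
            cases y with
            | copy => simp [isCp] at hy
            | guard u j =>
              simp only [Option.some.injEq, Prod.mk.injEq] at hxy
              rw [hxy.1, hxy.2]
            | tree => simp [isSp] at hy
          | tree => simp [isSp] at hx)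
      calc ((Ch.filter (fun x => isSp C x)).filter (fun x => ¬ isCp x)).card
          ≤ ((Cᶜ ×ˢ (Finset.univ : Finset (Fin 3))).image some).card := this
        _ ≤ (Cᶜ ×ˢ (Finset.univ : Finset (Fin 3))).card := Finset.card_image_le
        _ = (Fintype.card V - C.card) * 3 := by simp [Finset.card_product, Finset.card_compl]
    calc ((Ch.filter (fun x => isSp C x)).filter (fun x => ¬ isCp x)).sum (gadgetW β)
        ≤ ((Ch.filter (fun x => isSp C x)).filter (fun x => ¬ isCp x)).card • 1 := h1
      _ = ((Ch.filter (fun x => isSp C x)).filter (fun x => ¬ isCp x)).card := by simp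
      _ ≤ (Fintype.card V - C.card) * 3 := h2
  -- tree part
  have hT : ((Ch.filter (fun x => ¬ isSp C x)).filter (fun x => isTr x)).sum (gadgetW β)
      ≤ ∑ i ∈ Finset.range (m + 1), (β + 3 * i) := by
    set Tt := (Ch.filter (fun x => ¬ isSp C x)).filter (fun x => isTr x) with hTt
    have hmem : ∀ x ∈ Tt, x ∈ Ch ∧ isTr x := by
      intro x hx
      simp only [hTt, Finset.mem_filter] at hx
      exact ⟨hx.1.1, hx.2⟩
    have hinj : ∀ x ∈ Tt, ∀ y ∈ Tt, dep x = dep y → x = y := by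
      intro a ha b hb hab
      rcases hch a (hmem a ha).1 b (hmem b hb).1 with h | h
      · exact tdle_tree_eq h (hmem a ha).2 (hmem b hb).2 hab
      · exact (tdle_tree_eq h (hmem b hb).2 (hmem a ha).2 hab.symm).symm
    have h1 : Tt.sum (gadgetW β) = Tt.sum (fun x => β + 3 * dep x) := by
      apply Finset.sum_congr rfl
      intro x hx
      have hT2 := (hmem x hx).2
      cases x with
      | copy => simp [isTr] at hT2
      | guard => simp [isTr] at hT2
      | tree => rfl
    have h2 : (∑ i ∈ Tt.image dep, (β + 3 * i)) = ∑ x ∈ Tt, (β + 3 * dep x) :=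
      Finset.sum_image hinj
    rw [h1, ← h2]
    apply Finset.sum_le_sum_of_subset
    intro i hi
    simp only [Finset.mem_image] at hi
    obtain ⟨x, hx, rfl⟩ := hi
    rw [Finset.mem_range]
    have hT2 := (hmem x hx).2
    cases x with
    | copy => simp [isTr] at hT2
    | guard => simp [isTr] at hT2
    | tree t d j => exact d.isLt
  -- pendant part
  have hP : ((Ch.filter (fun x => ¬ isSp C x)).filter (fun x => ¬ isTr x)).sum (gadgetW β)
      ≤ 2 := by
    set Pt := (Ch.filter (fun x => ¬ isSp C x)).filter (fun x => ¬ isTr x) with hPt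
    have hmem : ∀ x ∈ Pt, x ∈ Ch ∧ ¬ isSp C x ∧ ¬ isTr x := by
      intro x hx
      simp only [hPt, Finset.mem_filter] at hx
      exact ⟨hx.1.1, hx.1.2, hx.2⟩
    have hcard : Pt.card ≤ 1 := by
      rw [Finset.card_le_one]
      intro a ha b hb
      rcases hch a (hmem a ha).1 b (hmem b hb).1 with h | h
      · exact tdle_pend_eq h (hmem a ha).2.1 (hmem a ha).2.2
      · exact (tdle_pend_eq h (hmem b hb).2.1 (hmem b hb).2.2).symm
    have h1 : Pt.sum (gadgetW β) ≤ Pt.card • 2 := by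
      apply Finset.sum_le_card_nsmul
      intro x hx
      have hT2 := (hmem x hx).2.2
      cases x with
      | copy => exact le_refl 2
      | guard => exact one_le_two
      | tree => simp [isTr] at hT2
    calc Pt.sum (gadgetW β) ≤ Pt.card • 2 := h1
      _ = Pt.card * 2 := by rw [smul_eq_mul]
      _ ≤ 1 * 2 := Nat.mul_le_mul_right 2 hcard
      _ = 2 := one_mul 2
  omega

end Stmt11Aux


/-- If the cubic graph `G` (on `n = 2^m` vertices, `m ≥ 1`, with
`1 < k < n - 1`) has a vertex cover of size `k`, then the gadget graph `G'` (with
weights given by `β = 3n + k + 3`, `α = Σ_{i=0}^{m} (β + 3i)`, `k' = 3n + k + α + 2`)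
has a treedepth decomposition of weighted depth at most `k'`; in particular
`wtd G' ≤ k'`. -/
theorem stmt11 {V : Type*} [Fintype V] (G : SimpleGraph V) (m : ℕ) (hm : 1 ≤ m)
    (hcard : Fintype.card V = 2 ^ m) (e : V ≃ Fin (2 ^ m))
    (hdeg : ∀ v : V, (G.neighborSet v).ncard = 3)
    (k : ℕ) (hk1 : 1 < k) (hk2 : k < Fintype.card V - 1)
    (β α k' : ℕ)
    (hβ : β = 3 * Fintype.card V + k + 3)
    (hα : α = ∑ i ∈ Finset.range (m + 1), (β + 3 * i))
    (hk' : k' = 3 * Fintype.card V + k + α + 2)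
    (C : Finset V) (hcov : ∀ u v : V, G.Adj u v → u ∈ C ∨ v ∈ C) (hC : C.card = k) :
    (∃ T : TDDecomp (gadget G e), T.weightedDepth (gadgetW β) ≤ k') ∧
      wtd (gadget G e) (gadgetW β) ≤ k' := by
  classical
  have key : ∃ T : TDDecomp (gadget G e), T.weightedDepth (gadgetW β) ≤ k' := by
    refine ⟨⟨Stmt11Aux.tdle C e, Stmt11Aux.tdle_refl C e, Stmt11Aux.tdle_antisymm C e,
      Stmt11Aux.tdle_trans C e, Stmt11Aux.tdle_down C e, Stmt11Aux.tdle_adj e C hcov⟩, ?_⟩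
    unfold TDDecomp.weightedDepth
    apply csSup_le
    · exact ⟨0, ∅, fun x hx => absurd hx (Finset.notMem_empty x), (Finset.sum_empty).symm⟩
    · rintro s ⟨Ch, hch, rfl⟩
      have hb := Stmt11Aux.chain_sum_le e C β Ch hch
      rw [hC, ← hα] at hb
      refine hb.trans ?_
      rw [hk']
      omega
  refine ⟨key, ?_⟩
  obtain ⟨T, hT⟩ := key
  exact le_trans (Nat.sInf_le ⟨T, rfl⟩) hT
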